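/- arXiv:1511.02913 — 2 statements merged into one kernel-verified Lean document; each statement's English description precedes it below -/
import Mathlib

section
/- Let G be a strongly connected digraph with start vertex s, and let u be a vertex that is a nontrivial dominator of G_s or equals s. If w is a proper descendant of u in the dominator tree D (w ∈ D̃(u)) with h(w) ∉ D̃(u), then the set H(w) of descendants of w in the loop nesting tree H induces a strongly connected component of G\u. -/
namespace StrongConn

variable {V : Type*}

/-- `p` is a walk in the digraph `G` from `u` to `v`, recorded as the list of visited vertices. -/
def IsWalk (G : V → V → Prop) (u v : V) (p : List V) : Prop :=
  p.Chain' G ∧ p.head? = some u ∧ p.getLast? = some v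

/-- The directed edge `(a,b)` occurs on the walk `p`. -/
def EdgeOn (a b : V) (p : List V) : Prop := (a, b) ∈ p.zip p.tail

/-- `v` is reachable from `u` in `G`. -/
def Reach (G : V → V → Prop) (u v : V) : Prop := ∃ p, IsWalk G u v p

/-- `u` and `v` are strongly connected in `G`. -/
def SConn (G : V → V → Prop) (u v : V) : Prop := Reach G u v ∧ Reach G v u

def StronglyConnected (G : V → V → Prop) : Prop := ∀ u v, Reach G u v

/-- `G` with the edge `(a,b)` deleted. -/
def DelEdge (G : V → V → Prop) (a b : V) : V → V → Prop :=
  fun x y => G x y ∧ ¬(x = a ∧ y = b)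

/-- `G` with the vertex `u` (and all incident edges) deleted. -/
def DelVertex (G : V → V → Prop) (u : V) : V → V → Prop :=
  fun x y => G x y ∧ x ≠ u ∧ y ≠ u

/-- `C` is a strongly connected component of `G`. -/
def IsSCC (G : V → V → Prop) (C : Set V) : Prop :=
  C.Nonempty ∧ (∀ x ∈ C, ∀ y ∈ C, SConn G x y) ∧ ∀ x ∈ C, ∀ y, SConn G x y → y ∈ C

/-- `(a,b)` is a strong bridge: an edge whose removal increases the number of
strongly connected components, i.e. it separates some strongly connected pair. -/
def IsStrongBridge (G : V → V → Prop) (a b : V) : Prop :=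
  G a b ∧ ∃ x y, SConn G x y ∧ ¬ SConn (DelEdge G a b) x y

/-- `u` is a strong articulation point: removing it increases the number of strongly
connected components, i.e. it separates some strongly connected pair of other vertices. -/
def IsStrongArticulationPoint (G : V → V → Prop) (u : V) : Prop :=
  ∃ x y, x ≠ u ∧ y ≠ u ∧ SConn G x y ∧ ¬ SConn (DelVertex G u) x y

/-- The reverse digraph. -/
def Rev (G : V → V → Prop) : V → V → Prop := fun x y => G y x

/-- `u` dominates `v` in the flow graph `G_s`; equivalently, `u` is an ancestor of `v`
(and `v` a descendant of `u`) in the dominator tree of `G_s`. -/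
def Dom (G : V → V → Prop) (s u v : V) : Prop :=
  ∀ p, IsWalk G s v p → u ∈ p

/-- `u` is the immediate dominator of `v` in `G_s` (the parent of `v` in the dominator tree). -/
def Idom (G : V → V → Prop) (s u v : V) : Prop :=
  u ≠ v ∧ Dom G s u v ∧ ∀ w, w ≠ v → Dom G s w v → Dom G s w u

/-- Edge `(a,b)` is a bridge of the flow graph `G_s`: every walk from `s` to `b` uses it. -/
def IsBridge (G : V → V → Prop) (s a b : V) : Prop :=
  G a b ∧ ∀ p, IsWalk G s b p → EdgeOn a b p

/-- `r` is the head of some bridge of `G_s`, i.e. a non-`s` root in the bridge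
decomposition of the dominator tree. -/
def IsBridgeHead (G : V → V → Prop) (s r : V) : Prop :=
  ∃ a, IsBridge G s a r

/-- `r` is the root of the tree containing `x` in the bridge decomposition of the
dominator tree of `G_s`: `r` dominates `x`, `r` is `s` or a bridge head, and every
bridge head dominating `x` dominates `r`. -/
def IsBDRoot (G : V → V → Prop) (s r x : V) : Prop :=
  Dom G s r x ∧ (r = s ∨ IsBridgeHead G s r) ∧
    ∀ z, Dom G s z x → IsBridgeHead G s z → Dom G s z r

/-- A depth-first search tree of `G` rooted at `s`, given by a parent function and a
preorder numbering. -/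
structure DFSTree (G : V → V → Prop) (s : V) where
  parent : V → V
  pre : V → ℕ
  parent_root : parent s = s
  parent_edge : ∀ v, v ≠ s → G (parent v) v
  root_reach : ∀ v, ∃ n, parent^[n] v = s
  pre_inj : Function.Injective pre
  pre_parent : ∀ v, v ≠ s → pre (parent v) < pre v
  /-- Descendants of a vertex form a contiguous interval in preorder. -/
  interval : ∀ u v w, (∃ n, parent^[n] w = u) → pre u ≤ pre v → pre v ≤ pre w →
      ∃ n, parent^[n] v = u
  /-- The defining property of depth-first search trees: every edge going forward
  in preorder goes to a descendant. -/
  dfs_edge : ∀ u v, G u v → pre u < pre v → ∃ n, parent^[n] v = u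

/-- `u` is an ancestor of `v` in the tree `T` (every vertex is an ancestor of itself). -/
def DFSTree.Anc {G : V → V → Prop} {s : V} (T : DFSTree G s) (u v : V) : Prop :=
  ∃ n, T.parent^[n] v = u

/-- `x ∈ loop(u)` with respect to the tree-ancestor relation `tanc`: `x` is a descendant
of `u` and there is a walk from `x` to `u` using only descendants of `u`. -/
def InLoop (G : V → V → Prop) (tanc : V → V → Prop) (u x : V) : Prop :=
  tanc u x ∧ ∃ p, IsWalk G x u p ∧ ∀ y ∈ p, tanc u y

/-- `hp` is the parent function of the loop nesting tree of `G_s` with respect to the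
DFS-tree ancestor relation `tanc`: `hp x` is the nearest proper ancestor `u` of `x`
in the DFS tree with `x ∈ loop(u)`. -/
def IsLoopParent (G : V → V → Prop) (s : V) (tanc : V → V → Prop) (hp : V → V) : Prop :=
  hp s = s ∧ ∀ x, x ≠ s →
    (tanc (hp x) x ∧ hp x ≠ x ∧ InLoop G tanc (hp x) x ∧
      ∀ u, tanc u x → u ≠ x → InLoop G tanc u x → tanc u (hp x))

/-- `u` is an ancestor of `v` in the loop nesting tree with parent function `hp`. -/
def HAnc (hp : V → V) (u v : V) : Prop := ∃ n, hp^[n] v = u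

/-- `w` is the nearest common ancestor of `x` and `y` in the loop nesting tree
with parent function `hp`. -/
def HNca (hp : V → V) (x y w : V) : Prop :=
  HAnc hp w x ∧ HAnc hp w y ∧ ∀ z, HAnc hp z x → HAnc hp z y → HAnc hp z w

/-- `u` is a nontrivial dominator of `G_s`: `u ≠ s` and `u` is not a leaf of the
dominator tree (it properly dominates some vertex). -/
def NontrivialDom (G : V → V → Prop) (s u : V) : Prop :=
  u ≠ s ∧ ∃ w, w ≠ u ∧ Dom G s u w

/-- `a` and `b` are siblings in the dominator tree of `G_s`. -/
def SiblingInD (G : V → V → Prop) (s a b : V) : Prop :=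
  a ≠ b ∧ ∃ w, Idom G s w a ∧ Idom G s w b

/-- Given the bridge-decomposition root function `r` and loop-nesting parent `hp`,
`z` is a boundary vertex. -/
def Boundary (s : V) (r hp : V → V) (z : V) : Prop := z = s ∨ r (hp z) ≠ r z

/-- `z` is the nearest boundary ancestor of `x` in the loop nesting tree. -/
def IsNearestBoundary (s : V) (r hp : V → V) (x z : V) : Prop :=
  HAnc hp z x ∧ Boundary s r hp z ∧
    ∀ z', HAnc hp z' x → Boundary s r hp z' → HAnc hp z' z

/-- `x` and `y` are 2-edge-connected: no single edge deletion leaves them in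
different strongly connected components. -/
def TwoEdgeConnected (G : V → V → Prop) (x y : V) : Prop :=
  ∀ a b, G a b → SConn (DelEdge G a b) x y


section Aux

variable {G Gp : V → V → Prop} {s : V}

/-- Inductive reachability, convenient for proofs. -/
inductive RW (G : V → V → Prop) : V → V → Prop
  | refl (a : V) : RW G a a
  | head {a b c : V} : G a b → RW G b c → RW G a c

theorem RW.trans {a b c : V} (h1 : RW G a b) (h2 : RW G b c) : RW G a c := by
  induction h1 with
  | refl => exact h2
  | head e _ ih => exact RW.head e (ih h2)

theorem RW.mono {G₁ G₂ : V → V → Prop} (h : ∀ x y, G₁ x y → G₂ x y) {a b : V}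
    (hw : RW G₁ a b) : RW G₂ a b := by
  induction hw with
  | refl => exact RW.refl _
  | head e _ ih => exact RW.head (h _ _ e) ih

theorem RW.snoc {a b c : V} (h : RW G a b) (e : G b c) : RW G a c :=
  h.trans (RW.head e (RW.refl _))

theorem isWalk_singleton (a : V) : IsWalk G a a [a] :=
  ⟨List.isChain_singleton a, rfl, rfl⟩

theorem head_mem_walk {a b : V} {p : List V} (h : IsWalk G a b p) : a ∈ p := by
  cases p with
  | nil => simp [IsWalk] at h
  | cons x rest =>
    have : x = a := by simpa using h.2.1
    subst this; exact List.mem_cons_self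

theorem last_mem_walk {a b : V} {p : List V} (h : IsWalk G a b p) : b ∈ p := by
  obtain ⟨hne, heq⟩ := List.mem_getLast?_eq_getLast (l := p) (x := b)
    (Option.mem_def.mpr h.2.2)
  exact heq ▸ List.getLast_mem hne

theorem two_le_length_walk {a b : V} {p : List V} (h : IsWalk G a b p) (hne : a ≠ b) :
    2 ≤ p.length := by
  match p with
  | [] => simp [IsWalk] at h
  | [x] =>
    exfalso; apply hne
    have h1 : x = a := by simpa using h.2.1
    have h2 : x = b := by simpa using h.2.2
    exact h1.symm.trans h2
  | x :: y :: t => simp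

theorem walk_split {P : V → Prop} :
    ∀ (p : List V) (a b : V), IsWalk G a b p → (∀ t ∈ p, P t) → ∀ z ∈ p,
      RW (fun x y => G x y ∧ P x ∧ P y) a z ∧ RW (fun x y => G x y ∧ P x ∧ P y) z b := by
  intro p
  induction p with
  | nil => intro a b h; simp [IsWalk] at h
  | cons x rest ih =>
    intro a b h hP z hz
    have hax : x = a := by simpa using h.2.1
    subst hax
    cases rest with
    | nil =>
      have hb : x = b := by simpa using h.2.2
      have hzx : z = x := by simpa using hz
      subst hb; subst hzx
      exact ⟨RW.refl _, RW.refl _⟩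
    | cons y t =>
      have hc := List.isChain_cons_cons.mp h.1
      have hwrest : IsWalk G y b (y :: t) :=
        ⟨hc.2, rfl, by rw [← h.2.2]; exact (List.getLast?_cons_cons).symm⟩
      have hP' : ∀ t' ∈ y :: t, P t' := fun t' ht' => hP t' (List.mem_cons_of_mem _ ht')
      have hedge : (fun x y => G x y ∧ P x ∧ P y) x y :=
        ⟨hc.1, hP x (List.mem_cons_self), hP y (List.mem_cons_of_mem _ (List.mem_cons_self))⟩
      rcases List.mem_cons.mp hz with hzx | hzrest
      · subst hzx
        refine ⟨RW.refl _, ?_⟩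
        exact RW.head hedge (ih y b hwrest hP' y (List.mem_cons_self)).2
      · obtain ⟨h1, h2⟩ := ih y b hwrest hP' z hzrest
        exact ⟨RW.head hedge h1, h2⟩

theorem RW.exists_walk {a b : V} (h : RW G a b) : ∃ p, IsWalk G a b p := by
  induction h with
  | refl c => exact ⟨[c], isWalk_singleton c⟩
  | @head a' b' c' e _ ih =>
    obtain ⟨p, wp⟩ := ih
    refine ⟨a' :: p, ?_, rfl, ?_⟩
    · refine List.isChain_cons.mpr ⟨?_, wp.1⟩
      intro y hy
      rw [wp.2.1] at hy
      simp at hy; subst hy; exact e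
    · cases p with
      | nil => simp [IsWalk] at wp
      | cons q t => rw [List.getLast?_cons_cons]; exact wp.2.2

theorem chain'_mem_cases : ∀ (p : List V), p.Chain' G → ∀ z ∈ p,
    p.head? = some z ∨ ∃ t, G t z := by
  intro p
  induction p with
  | nil => simp
  | cons x rest ih =>
    intro hc z hz
    rcases List.mem_cons.mp hz with rfl | hzr
    · exact Or.inl rfl
    · cases rest with
      | nil => simp at hzr
      | cons y t =>
        have hc' := List.isChain_cons_cons.mp hc
        rcases ih hc'.2 z hzr with hh | he
        · have : y = z := by simpa using hh
          exact Or.inr ⟨x, this ▸ hc'.1⟩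
        · exact Or.inr he

theorem rw_to_walk_pred {P : V → Prop} {a b : V}
    (h : RW (fun x y => G x y ∧ P x ∧ P y) a b) (ha : P a) :
    ∃ p, IsWalk G a b p ∧ ∀ z ∈ p, P z := by
  obtain ⟨p, wp⟩ := h.exists_walk
  refine ⟨p, ⟨wp.1.imp (fun _ _ h' => h'.1), wp.2⟩, ?_⟩
  intro z hz
  rcases chain'_mem_cases p wp.1 z hz with h1 | ⟨t, ht⟩
  · rw [wp.2.1] at h1
    have : a = z := by simpa using h1
    exact this ▸ ha
  · exact ht.2.2

theorem rw_reach {a b : V} (h : RW G a b) : Reach G a b := h.exists_walk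

theorem reach_rw {a b : V} (h : Reach G a b) : RW G a b := by
  obtain ⟨p, wp⟩ := h
  exact ((walk_split (P := fun _ => True) p a b wp (fun _ _ => trivial) b
    (last_mem_walk wp)).1).mono (fun x y h' => h'.1)

end Aux

section Tree

variable {G : V → V → Prop} {s : V}

theorem anc_refl (T : DFSTree G s) (a : V) : T.Anc a a := ⟨0, rfl⟩

theorem anc_trans (T : DFSTree G s) {a b c : V} (h1 : T.Anc a b) (h2 : T.Anc b c) :
    T.Anc a c := by
  obtain ⟨n, hn⟩ := h1
  obtain ⟨m, hm⟩ := h2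
  exact ⟨n + m, by rw [Function.iterate_add_apply, hm]; exact hn⟩

theorem anc_s (T : DFSTree G s) (a : V) : T.Anc s a := T.root_reach a

theorem anc_of_s (T : DFSTree G s) {a : V} (h : T.Anc a s) : a = s := by
  obtain ⟨n, hn⟩ := h
  rw [Function.iterate_fixed T.parent_root n] at hn
  exact hn.symm

theorem parent_anc (T : DFSTree G s) (b : V) : T.Anc (T.parent b) b :=
  ⟨1, by simp⟩

theorem pre_le_of_anc (T : DFSTree G s) {a b : V} (h : T.Anc a b) : T.pre a ≤ T.pre b := by
  obtain ⟨n, hn⟩ := h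
  induction n generalizing b with
  | zero => exact le_of_eq (congrArg T.pre hn.symm)
  | succ n ih =>
    rw [Function.iterate_succ_apply] at hn
    by_cases hb : b = s
    · rw [hb, T.parent_root, Function.iterate_fixed T.parent_root n] at hn
      rw [hb, ← hn]
    · exact le_trans (ih hn) (le_of_lt (T.pre_parent b hb))

theorem anc_antisymm (T : DFSTree G s) {a b : V} (h1 : T.Anc a b) (h2 : T.Anc b a) :
    a = b :=
  T.pre_inj (le_antisymm (pre_le_of_anc T h1) (pre_le_of_anc T h2))

theorem pre_lt_of_anc_ne (T : DFSTree G s) {a b : V} (h : T.Anc a b) (hne : a ≠ b) :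
    T.pre a < T.pre b :=
  lt_of_le_of_ne (pre_le_of_anc T h) (fun he => hne (T.pre_inj he))

theorem tree_reach (T : DFSTree G s) : ∀ (n : ℕ) (b a : V), T.parent^[n] b = a →
    RW (fun x y => G x y ∧ (T.Anc a x ∧ T.Anc x b) ∧ (T.Anc a y ∧ T.Anc y b)) a b := by
  intro n
  induction n with
  | zero =>
    intro b a h
    simp only [Function.iterate_zero, id] at h
    subst h
    exact RW.refl _
  | succ n ih =>
    intro b a h
    rw [Function.iterate_succ_apply] at h
    by_cases hbs : b = s
    · rw [hbs, T.parent_root, Function.iterate_fixed T.parent_root n] at h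
      subst h
      rw [hbs]
      exact RW.refl _
    · refine RW.snoc ((ih (T.parent b) a h).mono ?_) ?_
      · intro x y hxy
        exact ⟨hxy.1, ⟨hxy.2.1.1, anc_trans T hxy.2.1.2 (parent_anc T b)⟩,
          ⟨hxy.2.2.1, anc_trans T hxy.2.2.2 (parent_anc T b)⟩⟩
      · exact ⟨T.parent_edge b hbs, ⟨⟨n, h⟩, parent_anc T b⟩,
          ⟨⟨n + 1, by rw [Function.iterate_succ_apply]; exact h⟩, anc_refl T b⟩⟩

theorem dom_anc (T : DFSTree G s) {u w : V} (h : Dom G s u w) : T.Anc u w := by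
  obtain ⟨n, hn⟩ := T.root_reach w
  obtain ⟨p, wp, hmem⟩ := rw_to_walk_pred (P := fun z => T.Anc z w)
    ((tree_reach T n w s hn).mono (fun a b hab => ⟨hab.1, hab.2.1.2, hab.2.2.2⟩)) ⟨n, hn⟩
  exact hmem u (h p wp)

theorem dom_self_s {v : V} : Dom G s s v := fun p hp => head_mem_walk hp

theorem min_anc (T : DFSTree G s) {Gp : V → V → Prop} {P : V → Prop} {m : V}
    (hproj : ∀ x y, Gp x y → G x y ∧ P x ∧ P y)
    (hmin : ∀ t, P t → T.pre m ≤ T.pre t) {a z : V}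
    (h : RW Gp a z) : T.Anc m a → T.Anc m z := by
  induction h with
  | refl => exact id
  | @head x y zz e _ ih =>
    intro ha
    obtain ⟨hG, _, hPb⟩ := hproj _ _ e
    rcases lt_or_ge (T.pre x) (T.pre y) with h' | h'
    · exact ih (anc_trans T ha (T.dfs_edge x y hG h'))
    · exact ih (T.interval m y x ha (hmin y hPb) h')

theorem not_dom_avoid {u w : V} (hdom : Dom G s u w) (hsw : s ≠ w)
    (h : RW (DelVertex G u) s w) : False := by
  obtain ⟨p, wp⟩ := h.exists_walk
  have wpG : IsWalk G s w p := ⟨wp.1.imp (fun _ _ h' => h'.1), wp.2⟩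
  have hu : u ∈ p := hdom p wpG
  have hlen : 2 ≤ p.length := two_le_length_walk wp hsw
  -- every vertex of a length-≥2 DelVertex walk differs from u
  have : ∀ z ∈ p, z ≠ u := by
    intro z hz
    rcases chain'_mem_cases p wp.1 z hz with h1 | ⟨t, ht⟩
    · -- z is the head; but head s has an outgoing edge since length ≥ 2
      rw [wp.2.1] at h1
      have hzs : s = z := by simpa using h1
      match p, hlen, wp with
      | x :: y :: t, _, wp =>
        have hc := (List.isChain_cons_cons.mp wp.1).1
        have hx : x = s := by simpa using wp.2.1
        exact hzs ▸ (hx ▸ hc.2.1)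
    · exact ht.2.2
  exact this u hu rfl

theorem exists_pre_min (f : V → ℕ) :
    ∀ (l : List V), l ≠ [] → ∃ m ∈ l, ∀ z ∈ l, f m ≤ f z := by
  intro l
  induction l with
  | nil => simp
  | cons x rest ih =>
    intro _
    cases rest with
    | nil => exact ⟨x, List.mem_cons_self, by simp⟩
    | cons y t =>
      obtain ⟨m, hm, hmin⟩ := ih (by simp)
      rcases le_total (f x) (f m) with h | h
      · refine ⟨x, List.mem_cons_self, ?_⟩
        intro z hz
        rcases List.mem_cons.mp hz with rfl | hz'
        · exact le_refl _
        · exact le_trans h (hmin z hz')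
      · refine ⟨m, List.mem_cons_of_mem _ hm, ?_⟩
        intro z hz
        rcases List.mem_cons.mp hz with rfl | hz'
        · exact h
        · exact hmin z hz'

end Tree

section LoopNest

variable {G : V → V → Prop} {s : V} {hp : V → V}

theorem hanc_anc (T : DFSTree G s) (hlp : IsLoopParent G s T.Anc hp) {w x : V}
    (hws : w ≠ s) (h : HAnc hp w x) : T.Anc w x := by
  obtain ⟨n, hn⟩ := h
  induction n generalizing x with
  | zero =>
    simp only [Function.iterate_zero, id] at hn
    subst hn
    exact anc_refl T _
  | succ n ih =>
    rw [Function.iterate_succ_apply] at hn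
    by_cases hxs : x = s
    · rw [hxs, hlp.1, Function.iterate_fixed hlp.1 n] at hn
      exact absurd hn.symm hws
    · exact anc_trans T (ih hn) (hlp.2 x hxs).1

theorem hanc_loop (T : DFSTree G s) (hlp : IsLoopParent G s T.Anc hp) {w x : V}
    (hws : w ≠ s) (h : HAnc hp w x) : x = w ∨ InLoop G T.Anc w x := by
  obtain ⟨n, hn⟩ := h
  induction n generalizing x with
  | zero => exact Or.inl hn
  | succ n ih =>
    rw [Function.iterate_succ_apply] at hn
    by_cases hxs : x = s
    · rw [hxs, hlp.1, Function.iterate_fixed hlp.1 n] at hn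
      exact absurd hn.symm hws
    · have hilx : InLoop G T.Anc (hp x) x := (hlp.2 x hxs).2.2.1
      rcases ih hn with he | hil
      · exact Or.inr (he ▸ hilx)
      · right
        have hwhx : T.Anc w (hp x) := hanc_anc T hlp hws ⟨n, hn⟩
        have hwx : T.Anc w x := anc_trans T hwhx (hlp.2 x hxs).1
        refine ⟨hwx, ?_⟩
        obtain ⟨_, p, wp, hmem⟩ := hilx
        have t1 : RW (fun a b => G a b ∧ T.Anc w a ∧ T.Anc w b) x (hp x) :=
          (walk_split p x (hp x) wp (fun t ht => anc_trans T hwhx (hmem t ht)) x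
            (head_mem_walk wp)).2
        obtain ⟨_, q, wq, hqm⟩ := hil
        have t2 : RW (fun a b => G a b ∧ T.Anc w a ∧ T.Anc w b) (hp x) w :=
          (walk_split q (hp x) w wq hqm (hp x) (head_mem_walk wq)).2
        exact rw_to_walk_pred (t1.trans t2) hwx

theorem loop_hanc (T : DFSTree G s) (hlp : IsLoopParent G s T.Anc hp) {m z : V}
    (hanc : T.Anc m z) (hl : z = m ∨ InLoop G T.Anc m z) : HAnc hp m z := by
  suffices h : ∀ N z, T.pre z < N → T.Anc m z → (z = m ∨ InLoop G T.Anc m z) →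
      HAnc hp m z from h (T.pre z + 1) z (Nat.lt_succ_self _) hanc hl
  intro N
  induction N with
  | zero => exact fun z h => absurd h (Nat.not_lt_zero _)
  | succ N ih =>
    intro z hzN hanc hl
    by_cases hzm : z = m
    · exact ⟨0, hzm⟩
    rcases hl with rfl | hl
    · exact ⟨0, rfl⟩
    have hzs : z ≠ s := by
      intro he
      exact hzm (he.trans (anc_of_s T (he ▸ hanc)).symm)
    obtain ⟨h1, h2, _, h4⟩ := hlp.2 z hzs
    have hmhz : T.Anc m (hp z) := h4 m hanc (fun he => hzm he.symm) hl
    have hlt : T.pre (hp z) < T.pre z := pre_lt_of_anc_ne T h1 h2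
    by_cases hhzm : hp z = m
    · exact ⟨1, by simpa using hhzm⟩
    · have hloophz : InLoop G T.Anc m (hp z) := by
        refine ⟨hmhz, ?_⟩
        obtain ⟨k, hk⟩ := h1
        have t1 : RW (fun a b => G a b ∧ T.Anc m a ∧ T.Anc m b) (hp z) z :=
          (tree_reach T k z (hp z) hk).mono (fun a b hab =>
            ⟨hab.1, anc_trans T hmhz hab.2.1.1, anc_trans T hmhz hab.2.2.1⟩)
        obtain ⟨_, p, wp, hmem⟩ := hl
        have t2 : RW (fun a b => G a b ∧ T.Anc m a ∧ T.Anc m b) z m :=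
          (walk_split p z m wp hmem z (head_mem_walk wp)).2
        exact rw_to_walk_pred (t1.trans t2) hmhz
      obtain ⟨n, hn⟩ := ih (hp z) (lt_of_lt_of_le hlt (Nat.lt_succ_iff.mp hzN)) hmhz
        (Or.inr hloophz)
      exact ⟨n + 1, by rw [Function.iterate_succ_apply]; exact hn⟩

end LoopNest

/-- If `u` is a nontrivial dominator of `G_s` or `u = s`, and `w` is a proper
descendant of `u` in `D` with `h(w) ∉ D̃(u)`, then `H(w)` induces a strongly
connected component of `G \ u`. -/
theorem stmt14 (G : V → V → Prop) (hG : StronglyConnected G) (s u : V)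
    (hu : NontrivialDom G s u ∨ u = s)
    (T : DFSTree G s) (hp : V → V) (hlp : IsLoopParent G s T.Anc hp)
    (w : V) (hw : Dom G s u w ∧ w ≠ u)
    (hw2 : ¬ (Dom G s u (hp w) ∧ hp w ≠ u)) :
    IsSCC (DelVertex G u) {x | HAnc hp w x} := by
  obtain ⟨hdomw, hwu⟩ := hw
  have hws : w ≠ s := by
    intro he
    have h1 : IsWalk G s w [s] := by rw [he]; exact isWalk_singleton s
    have h2 := hdomw [s] h1
    simp at h2
    exact hwu (he.trans h2.symm)
  have hanc_uw : T.Anc u w := dom_anc T hdomw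
  have hu_not_desc : ∀ z, T.Anc w z → z ≠ u := by
    intro z hz he
    subst he
    exact hwu (anc_antisymm T hanc_uw hz).symm
  -- both-way reachability in G \ u between w and any x ∈ H(w)
  have hBoth : ∀ x, HAnc hp w x → RW (DelVertex G u) w x ∧ RW (DelVertex G u) x w := by
    intro x hx
    have hancwx : T.Anc w x := hanc_anc T hlp hws hx
    constructor
    · obtain ⟨k, hk⟩ := hancwx
      exact (tree_reach T k x w hk).mono (fun a b hab =>
        ⟨hab.1, hu_not_desc _ hab.2.1.1, hu_not_desc _ hab.2.2.1⟩)
    · rcases hanc_loop T hlp hws hx with rfl | hil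
      · exact RW.refl _
      · obtain ⟨_, p, wp, hmem⟩ := hil
        exact ((walk_split p x w wp hmem x (head_mem_walk wp)).2).mono (fun a b hab =>
          ⟨hab.1, hu_not_desc _ hab.2.1, hu_not_desc _ hab.2.2⟩)
  refine ⟨⟨w, ⟨0, rfl⟩⟩, ?_, ?_⟩
  · -- pairwise strong connectivity
    intro x hx y hy
    exact ⟨rw_reach (((hBoth x hx).2).trans (hBoth y hy).1),
      rw_reach (((hBoth y hy).2).trans (hBoth x hx).1)⟩
  · -- maximality
    intro x hx y hxy
    have hwy1 : RW (DelVertex G u) w y := ((hBoth x hx).1).trans (reach_rw hxy.1)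
    have hwy2 : RW (DelVertex G u) y w := (reach_rw hxy.2).trans (hBoth x hx).2
    by_cases hyw : y = w
    · exact ⟨0, hyw⟩
    obtain ⟨p1, wp1⟩ := hwy1.exists_walk
    obtain ⟨p2, wp2⟩ := hwy2.exists_walk
    have hne1 : w ≠ y := fun h => hyw h.symm
    set P : V → Prop := fun t => t ∈ p1 ∨ t ∈ p2 with hP
    set Gp : V → V → Prop := fun a b => DelVertex G u a b ∧ P a ∧ P b with hGp
    have hPne : ∀ t, P t → t ≠ u := by
      have aux : ∀ (q : List V) (a b : V), IsWalk (DelVertex G u) a b q → a ≠ b →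
          ∀ z ∈ q, z ≠ u := by
        intro q a b hq hab z hz
        rcases chain'_mem_cases q hq.1 z hz with h1 | ⟨t, ht⟩
        · rw [hq.2.1] at h1
          have haz : a = z := by simpa using h1
          subst haz
          have hlen := two_le_length_walk hq hab
          match q, hlen, hq with
          | c :: d :: t, _, hq =>
            have hc := (List.isChain_cons_cons.mp hq.1).1
            have hca : c = a := by simpa using hq.2.1
            exact hca ▸ hc.2.1
        · exact ht.2.2
      rintro t (ht | ht)
      · exact aux p1 w y wp1 hne1 t ht
      · exact aux p2 y w wp2 hyw t ht
    have hw_mem1 : w ∈ p1 := head_mem_walk wp1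
    have hy_mem1 : y ∈ p1 := last_mem_walk wp1
    have hy_mem2 : y ∈ p2 := head_mem_walk wp2
    have hw_mem2 : w ∈ p2 := last_mem_walk wp2
    have hP1 : ∀ t ∈ p1, P t := fun t ht => Or.inl ht
    have hP2 : ∀ t ∈ p2, P t := fun t ht => Or.inr ht
    -- hub reachability within P
    have hubTo : ∀ t, P t → RW Gp w t := by
      rintro t (ht | ht)
      · exact (walk_split p1 w y wp1 hP1 t ht).1
      · exact ((walk_split p1 w y wp1 hP1 y hy_mem1).1).trans
          (walk_split p2 y w wp2 hP2 t ht).1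
    have hubFrom : ∀ t, P t → RW Gp t w := by
      rintro t (ht | ht)
      · exact ((walk_split p1 w y wp1 hP1 t ht).2).trans
          (walk_split p2 y w wp2 hP2 y hy_mem2).2
      · exact (walk_split p2 y w wp2 hP2 t ht).2
    obtain ⟨m, hm_mem, hmin0⟩ := exists_pre_min T.pre (p1 ++ p2)
      (List.ne_nil_of_mem (List.mem_append.mpr (Or.inl hw_mem1)))
    have hPm : P m := List.mem_append.mp hm_mem
    have hmin : ∀ t, P t → T.pre m ≤ T.pre t := fun t ht =>
      hmin0 t (List.mem_append.mpr ht)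
    have hGpG : ∀ a b, Gp a b → G a b ∧ P a ∧ P b := fun a b h => ⟨h.1.1, h.2⟩
    have hmu : m ≠ u := hPne m hPm
    have hanc_m : ∀ t, P t → T.Anc m t := by
      intro t ht
      exact min_anc T hGpG hmin ((hubFrom m hPm).trans (hubTo t ht)) (anc_refl T m)
    have hloopm : ∀ t, P t → HAnc hp m t := by
      intro t ht
      refine loop_hanc T hlp (hanc_m t ht) ?_
      by_cases htm : t = m
      · exact Or.inl htm
      · right
        refine ⟨hanc_m t ht, ?_⟩
        have t0 : RW Gp t m := (hubFrom t ht).trans (hubTo m hPm)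
        have t1 : RW (fun a b => G a b ∧ T.Anc m a ∧ T.Anc m b) t m :=
          t0.mono (fun a b hab => ⟨hab.1.1, hanc_m a hab.2.1, hanc_m b hab.2.2⟩)
        exact rw_to_walk_pred t1 (hanc_m t ht)
    have hmw : HAnc hp m w := hloopm w (Or.inl hw_mem1)
    have hmy : HAnc hp m y := hloopm y (Or.inr hy_mem2)
    by_cases hmw' : m = w
    · exact hmw' ▸ hmy
    exfalso
    -- u is a proper tree ancestor of m
    have hanc_um : T.Anc u m := by
      by_contra hna
      obtain ⟨k, hk⟩ := anc_s T m
      have h1 : RW (DelVertex G u) s m :=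
        (tree_reach T k m s hk).mono (fun a b hab =>
          ⟨hab.1, fun he => hna (he ▸ hab.2.1.2), fun he => hna (he ▸ hab.2.2.2)⟩)
      have h2 : RW (DelVertex G u) m w := (hubFrom m hPm).mono (fun a b hab => hab.1)
      exact not_dom_avoid hdomw (Ne.symm hws) (h1.trans h2)
    have hum : u ≠ m := fun he => hmu he.symm
    have hms : m ≠ s := by
      intro he
      rw [he] at hanc_um
      exact hum ((anc_of_s T hanc_um).trans he.symm)
    have hmhw : HAnc hp m (hp w) := by
      obtain ⟨n, hn⟩ := hmw
      cases n with
      | zero => exact absurd hn.symm hmw'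
      | succ n =>
        rw [Function.iterate_succ_apply] at hn
        exact ⟨n, hn⟩
    have hanc_mhw : T.Anc m (hp w) := hanc_anc T hlp hms hmhw
    have hhwu : hp w ≠ u := by
      intro he
      rw [he] at hanc_mhw
      exact hum (anc_antisymm T hanc_um hanc_mhw)
    have hanc_uhw : T.Anc u (hp w) := anc_trans T hanc_um hanc_mhw
    have hdomhw : Dom G s u (hp w) := by
      by_cases hus : u = s
      · rw [hus]; exact dom_self_s
      · by_contra hnd
        simp only [Dom, not_forall] at hnd
        obtain ⟨p, wp, hup⟩ := hnd
        have h1 : RW (DelVertex G u) s (hp w) :=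
          ((walk_split (P := fun t => t ≠ u) p s (hp w) wp
            (fun t ht he => hup (he ▸ ht)) (hp w) (last_mem_walk wp)).1).mono
            (fun a b hab => ⟨hab.1, hab.2.1, hab.2.2⟩)
        obtain ⟨k, hk⟩ := (hlp.2 w hws).1
        have h2 : RW (DelVertex G u) (hp w) w :=
          (tree_reach T k w (hp w) hk).mono (fun a b hab =>
            ⟨hab.1,
             fun he => hhwu (anc_antisymm T hanc_uhw (he ▸ hab.2.1.1)).symm,
             fun he => hhwu (anc_antisymm T hanc_uhw (he ▸ hab.2.2.1)).symm⟩)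
        exact not_dom_avoid hdomw (Ne.symm hws) (h1.trans h2)
    exact hw2 ⟨hdomhw, hhwu⟩

end StrongConn
end

section
/- Let G be a strongly connected digraph with start vertex s and loop nesting tree H of G_s. Then s is a strong articulation point of G if and only if s has at least two children in H. -/
namespace StrongConn

variable {V : Type*}

/-! ### Auxiliary lemmas -/

section Aux

variable {G : V → V → Prop} {s : V}

lemma mem_of_getLast?' : ∀ {l : List V} {a : V}, l.getLast? = some a → a ∈ l
  | [], a, h => by simp at h
  | [x], a, h => by simp_all
  | x :: y :: t, a, h => by
      rw [List.getLast?_cons_cons] at h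
      exact List.mem_cons_of_mem _ (mem_of_getLast?' h)

lemma walk_nonempty {u v : V} {p : List V} (h : IsWalk G u v p) : p ≠ [] := by
  rcases h with ⟨_, h2, _⟩; intro he; subst he; simp at h2

lemma walk_head_mem {u v : V} {p : List V} (h : IsWalk G u v p) : u ∈ p := by
  rcases h with ⟨_, h2, _⟩
  cases p with
  | nil => simp at h2
  | cons a t => simp at h2; subst h2; simp

lemma walk_last_mem {u v : V} {p : List V} (h : IsWalk G u v p) : v ∈ p :=
  mem_of_getLast?' h.2.2

lemma walk_single (v : V) : IsWalk G v v [v] := ⟨List.isChain_singleton v, rfl, rfl⟩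

lemma walk_append {u v w : V} {p q : List V} (h1 : IsWalk G u v p) (h2 : IsWalk G v w q) :
    IsWalk G u w (p ++ q.tail) ∧ ∀ y, y ∈ p ∨ y ∈ q → y ∈ p ++ q.tail := by
  obtain ⟨c1, hh1, hl1⟩ := h1
  obtain ⟨c2, hh2, hl2⟩ := h2
  obtain ⟨q0, qt, rfl⟩ : ∃ a t, q = a :: t := by
    cases q with
    | nil => simp at hh2
    | cons a t => exact ⟨a, t, rfl⟩
  obtain rfl : v = q0 := (by simpa using hh2 : q0 = v).symm
  obtain ⟨p0, pt, rfl⟩ : ∃ a t, p = a :: t := by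
    cases p with
    | nil => simp at hh1
    | cons a t => exact ⟨a, t, rfl⟩
  obtain rfl : u = p0 := (by simpa using hh1 : p0 = u).symm
  constructor
  · refine ⟨?_, by simp, ?_⟩
    · rw [List.Chain', List.isChain_append]
      refine ⟨c1, (List.isChain_cons.mp c2).2, ?_⟩
      intro a ha b hb
      rw [hl1] at ha
      simp only [Option.mem_def, Option.some.injEq] at ha
      subst ha
      exact (List.isChain_cons.mp c2).1 b hb
    · show ((u :: pt) ++ qt).getLast? = some w
      cases qt with
      | nil =>
        have : v = w := by simpa using hl2
        subst this
        simpa using hl1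
      | cons b t =>
        rw [List.getLast?_cons_cons] at hl2
        cases pt with
        | nil => simpa using hl2
        | cons c t2 =>
          rw [show (u :: c :: t2) ++ b :: t = (u :: c :: t2) ++ b :: t from rfl]
          rw [List.getLast?_append_cons]
          exact hl2
  · intro y hy
    rcases hy with hy | hy
    · exact List.mem_append_left _ hy
    · rcases List.mem_cons.mp hy with rfl | hy2
      · exact List.mem_append_left _ (mem_of_getLast?' hl1)
      · exact List.mem_append_right _ hy2

lemma walk_mono {G' : V → V → Prop} (hsub : ∀ a b, G' a b → G a b) {u v : V} {p : List V}
    (h : IsWalk G' u v p) : IsWalk G u v p :=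
  ⟨h.1.imp (fun {a b} hab => hsub a b hab), h.2.1, h.2.2⟩

lemma chain'_del : ∀ (p : List V), p.Chain' G → (∀ y ∈ p, y ≠ s) → p.Chain' (DelVertex G s)
  | [], _, _ => List.isChain_nil
  | [a], _, _ => List.isChain_singleton a
  | a :: b :: t, hc, hns => by
      rw [List.Chain', List.isChain_cons_cons] at hc ⊢
      exact ⟨⟨hc.1, hns a (by simp), hns b (by simp)⟩,
        chain'_del (b :: t) hc.2 (fun y hy => hns y (List.mem_cons_of_mem _ hy))⟩

lemma walk_del {u v : V} {p : List V} (h : IsWalk G u v p) (hns : ∀ y ∈ p, y ≠ s) :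
    IsWalk (DelVertex G s) u v p :=
  ⟨chain'_del p h.1 hns, h.2.1, h.2.2⟩

lemma walk_ne_s : ∀ (p : List V) (u v : V), IsWalk (DelVertex G s) u v p → u ≠ s →
    ∀ y ∈ p, y ≠ s
  | [], u, v, h, _, y, hy => by simp at hy
  | [a], u, v, h, hu, y, hy => by
      obtain ⟨_, hh, _⟩ := h
      simp at hh hy
      subst hh; subst hy; exact hu
  | a :: b :: t, u, v, h, hu, y, hy => by
      obtain ⟨hc, hh, hl⟩ := h
      simp only [List.head?_cons, Option.some.injEq] at hh
      subst hh
      rw [List.Chain', List.isChain_cons_cons] at hc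
      have hbs : b ≠ s := hc.1.2.2
      have hw : IsWalk (DelVertex G s) b v (b :: t) :=
        ⟨hc.2, rfl, by rw [List.getLast?_cons_cons] at hl; exact hl⟩
      rcases List.mem_cons.mp hy with rfl | hy2
      · exact hu
      · exact walk_ne_s (b :: t) b v hw hbs y hy2

lemma walk_split_s17 {u w m : V} {p : List V} (h : IsWalk G u w p) (hm : m ∈ p) :
    ∃ p₁ p₂, p = p₁ ++ m :: p₂ ∧ IsWalk G u m (p₁ ++ [m]) ∧ IsWalk G m w (m :: p₂) := by
  obtain ⟨p₁, p₂, rfl⟩ := List.append_of_mem hm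
  obtain ⟨hc, hh, hl⟩ := h
  refine ⟨p₁, p₂, rfl, ⟨hc.prefix ⟨p₂, by simp⟩, ?_, List.getLast?_concat⟩,
    ⟨hc.suffix ⟨p₁, rfl⟩, rfl, ?_⟩⟩
  · cases p₁ with
    | nil => simpa using hh
    | cons a t => simp only [List.cons_append, List.head?_cons, Option.some.injEq] at hh ⊢; exact hh
  · rw [List.getLast?_append_cons] at hl
    exact hl

lemma exists_min_pre (f : V → ℕ) : ∀ (l : List V), l ≠ [] → ∃ m ∈ l, ∀ y ∈ l, f m ≤ f y
  | [], h => absurd rfl h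
  | [a], _ => ⟨a, by simp⟩
  | a :: b :: t, _ => by
      obtain ⟨m, hm, hmin⟩ := exists_min_pre f (b :: t) (by simp)
      by_cases hle : f a ≤ f m
      · refine ⟨a, by simp, fun y hy => ?_⟩
        rcases List.mem_cons.mp hy with rfl | hy2
        · exact le_refl _
        · exact le_trans hle (hmin y hy2)
      · refine ⟨m, List.mem_cons_of_mem _ hm, fun y hy => ?_⟩
        rcases List.mem_cons.mp hy with rfl | hy2
        · exact le_of_not_ge hle
        · exact hmin y hy2

variable (T : DFSTree G s)

lemma anc_refl_s17 (v : V) : T.Anc v v := ⟨0, rfl⟩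

lemma anc_trans_s17 {u v w : V} (h1 : T.Anc u v) (h2 : T.Anc v w) : T.Anc u w := by
  obtain ⟨n, hn⟩ := h1
  obtain ⟨k, hk⟩ := h2
  exact ⟨n + k, by rw [Function.iterate_add_apply, hk, hn]⟩

lemma parent_iter_root : ∀ n, T.parent^[n] s = s := by
  intro n
  induction n with
  | zero => rfl
  | succ k ih => rw [Function.iterate_succ_apply', ih, T.parent_root]

lemma anc_of_root_eq {u : V} (h : T.Anc u s) : u = s := by
  obtain ⟨n, hn⟩ := h
  rw [parent_iter_root T n] at hn
  exact hn.symm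

lemma pre_iter_le (n : ℕ) (v : V) : T.pre (T.parent^[n] v) ≤ T.pre v := by
  induction n with
  | zero => exact le_refl _
  | succ k ih =>
    rw [Function.iterate_succ_apply']
    by_cases hw : T.parent^[k] v = s
    · rw [hw, T.parent_root]; have h := ih; rwa [hw] at h
    · exact le_trans (le_of_lt (T.pre_parent _ hw)) ih

lemma pre_le_of_anc_s17 {u v : V} (h : T.Anc u v) : T.pre u ≤ T.pre v := by
  obtain ⟨n, hn⟩ := h
  rw [← hn]
  exact pre_iter_le T n v

lemma pre_lt_of_anc {u v : V} (h : T.Anc u v) (hne : u ≠ v) : T.pre u < T.pre v :=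
  lt_of_le_of_ne (pre_le_of_anc_s17 T h) (fun he => hne (T.pre_inj he))

lemma ne_s_of_anc {u v : V} (h : T.Anc u v) (hu : u ≠ s) : v ≠ s :=
  fun he => hu (anc_of_root_eq T (he ▸ h))

/-- The DFS path lemma: along a walk whose vertices all have preorder number at least
that of `m`, if `m` is an ancestor of the start then it is an ancestor of every vertex. -/
lemma walk_anc (m : V) : ∀ (p : List V) (a b : V), IsWalk G a b p →
    (∀ y ∈ p, T.pre m ≤ T.pre y) → T.Anc m a → ∀ y ∈ p, T.Anc m y
  | [], _, _, h, _, _, y, hy => by simp at hy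
  | [x], a, b, h, _, hma, y, hy => by
      obtain ⟨_, hh, _⟩ := h
      simp at hh hy
      subst hh; subst hy; exact hma
  | x :: x2 :: t, a, b, h, hmin, hma, y, hy => by
      obtain ⟨hc, hh, hl⟩ := h
      simp only [List.head?_cons, Option.some.injEq] at hh
      subst hh
      rw [List.Chain', List.isChain_cons_cons] at hc
      have hedge : G x x2 := hc.1
      have h2 : T.Anc m x2 := by
        rcases lt_trichotomy (T.pre x) (T.pre x2) with hlt | heq | hgt
        · exact anc_trans_s17 T hma (T.dfs_edge x x2 hedge hlt)
        · rw [T.pre_inj heq] at hma; exact hma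
        · exact T.interval m x2 x hma (hmin x2 (by simp)) (le_of_lt hgt)
      have hw2 : IsWalk G x2 b (x2 :: t) :=
        ⟨hc.2, rfl, by rw [List.getLast?_cons_cons] at hl; exact hl⟩
      rcases List.mem_cons.mp hy with rfl | hy2
      · exact hma
      · exact walk_anc m (x2 :: t) x2 b hw2
          (fun z hz => hmin z (List.mem_cons_of_mem _ hz)) h2 y hy2

/-- The tree path from an ancestor down to a vertex is a walk, within descendants. -/
lemma tree_walk : ∀ (n : ℕ) (v : V), ∃ p, IsWalk G (T.parent^[n] v) v p ∧
    ∀ y ∈ p, T.Anc (T.parent^[n] v) y := by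
  intro n
  induction n with
  | zero =>
    intro v
    exact ⟨[v], walk_single v, by simp [Function.iterate_zero_apply]; exact anc_refl_s17 T v⟩
  | succ k ih =>
    intro v
    by_cases hv : v = s
    · rw [hv, parent_iter_root T]
      exact ⟨[s], walk_single s, fun y hy => by simp at hy; rw [hy]; exact anc_refl_s17 T s⟩
    · obtain ⟨q, hq, hanc⟩ := ih (T.parent v)
      rw [Function.iterate_succ_apply]
      refine ⟨q ++ [v], ⟨?_, ?_, List.getLast?_concat⟩, ?_⟩
      · rw [List.Chain', List.isChain_append]
        refine ⟨hq.1, List.isChain_singleton v, ?_⟩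
        intro a ha b hb
        rw [hq.2.2] at ha
        simp only [Option.mem_def, Option.some.injEq] at ha hb
        simp at hb
        subst ha; subst hb
        exact T.parent_edge v hv
      · obtain ⟨q0, qt, rfl⟩ : ∃ a t, q = a :: t := by
          cases q with
          | nil => exact absurd hq.2.1 (by simp)
          | cons a t => exact ⟨a, t, rfl⟩
        have : q0 = T.parent^[k] (T.parent v) := by simpa using hq.2.1
        simp [this]
      · intro y hy
        rcases List.mem_append.mp hy with hy1 | hy2
        · exact hanc y hy1
        · simp at hy2; subst hy2
          exact ⟨k + 1, by rw [Function.iterate_succ_apply]⟩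

/-- Descending the tree from a non-root ancestor avoids `s`. -/
lemma reach_down {u v : V} (hanc : T.Anc u v) (hu : u ≠ s) :
    ∃ p, IsWalk (DelVertex G s) u v p := by
  obtain ⟨n, hn⟩ := hanc
  obtain ⟨p, hw, ha⟩ := tree_walk T n v
  rw [hn] at hw ha
  exact ⟨p, walk_del hw (fun y hy => ne_s_of_anc T (ha y hy) hu)⟩

/-- Every non-root vertex reaches, avoiding `s`, a child of `s` in the loop nesting
tree which is also its tree ancestor. -/
lemma reach_child {hp : V → V} (hlp : IsLoopParent G s T.Anc hp) :
    ∀ (n : ℕ) (v : V), T.pre v ≤ n → v ≠ s →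
    ∃ c, c ≠ s ∧ hp c = s ∧ T.Anc c v ∧ ∃ p, IsWalk (DelVertex G s) v c p := by
  intro n
  induction n with
  | zero =>
    intro v h0 hv
    obtain ⟨h1, h2, h3, h4⟩ := hlp.2 v hv
    by_cases hs : hp v = s
    · exact ⟨v, hv, hs, anc_refl_s17 T v, ⟨[v], walk_del (walk_single v) (by simpa using hv)⟩⟩
    · exact absurd (pre_lt_of_anc T h1 h2) (by omega)
  | succ k ih =>
    intro v hk hv
    obtain ⟨h1, h2, h3, h4⟩ := hlp.2 v hv
    by_cases hs : hp v = s
    · exact ⟨v, hv, hs, anc_refl_s17 T v, ⟨[v], walk_del (walk_single v) (by simpa using hv)⟩⟩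
    · have hlt : T.pre (hp v) < T.pre v := pre_lt_of_anc T h1 h2
      obtain ⟨p0, hwp, hmem⟩ := h3.2
      have hw1 : IsWalk (DelVertex G s) v (hp v) p0 :=
        walk_del hwp (fun y hy => ne_s_of_anc T (hmem y hy) hs)
      obtain ⟨c, hc1, hc2, hc3, q, hq⟩ := ih (hp v) (by omega) hs
      exact ⟨c, hc1, hc2, anc_trans_s17 T hc3 h1, ⟨_, (walk_append hw1 hq).1⟩⟩

/-- Key lemma for the forward implication: two distinct children of `s` in the loop
nesting tree cannot be strongly connected avoiding `s`. -/
lemma lemE {hp : V → V} (hlp : IsLoopParent G s T.Anc hp) {x y m : V}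
    (hx : x ≠ s) (hy : y ≠ s) (hpx : hp x = s) (hpy : hp y = s) (hxy : x ≠ y)
    {p q : List V} (hwp : IsWalk G x y p) (hwq : IsWalk G y x q)
    (hns : ∀ z, z ∈ p ∨ z ∈ q → z ≠ s)
    (hmin : ∀ z, z ∈ p ∨ z ∈ q → T.pre m ≤ T.pre z)
    (hm : m ∈ p) : False := by
  obtain ⟨p₁, p₂, hpeq, hwA, hwB⟩ := walk_split_s17 hwp hm
  have memA : ∀ z ∈ p₁ ++ [m], z ∈ p := by
    intro z hz
    rw [hpeq]
    rcases List.mem_append.mp hz with h | h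
    · exact List.mem_append_left _ h
    · simp at h; subst h; exact List.mem_append_right _ (by simp)
  have memB : ∀ z ∈ m :: p₂, z ∈ p := by
    intro z hz
    rw [hpeq]
    exact List.mem_append_right _ hz
  obtain ⟨hwC, memC⟩ := walk_append hwq hwA
  obtain ⟨hwW, memW⟩ := walk_append hwB hwC
  set W := (m :: p₂) ++ (q ++ (p₁ ++ [m]).tail).tail with hW
  have memWpq : ∀ z ∈ W, z ∈ p ∨ z ∈ q := by
    intro z hz
    rcases List.mem_append.mp hz with h | h
    · exact Or.inl (memB z h)
    · have h2 := List.mem_of_mem_tail h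
      rcases List.mem_append.mp h2 with h3 | h3
      · exact Or.inr h3
      · exact Or.inl (memA z (List.mem_of_mem_tail h3))
  have hancW : ∀ z ∈ W, T.Anc m z :=
    walk_anc T m W m m hwW (fun z hz => hmin z (memWpq z hz)) (anc_refl_s17 T m)
  have hms : m ≠ s := hns m (Or.inl hm)
  have hAinW : ∀ z ∈ p₁ ++ [m], z ∈ W := fun z hz => memW z (Or.inr (memC z (Or.inr hz)))
  have hCinW : ∀ z ∈ q ++ (p₁ ++ [m]).tail, z ∈ W := fun z hz => memW z (Or.inr hz)
  have hqinW : ∀ z ∈ q, z ∈ W := fun z hz => memW z (Or.inr (memC z (Or.inl hz)))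
  -- x = m
  have hxm : x = m := by
    by_contra hne
    have hancx : T.Anc m x := hancW x (hqinW x (walk_last_mem hwq))
    have hinloop : InLoop G T.Anc m x :=
      ⟨hancx, p₁ ++ [m], hwA, fun z hz => hancW z (hAinW z hz)⟩
    have := (hlp.2 x hx).2.2.2 m hancx (fun he => hne he.symm) hinloop
    rw [hpx] at this
    exact hms (anc_of_root_eq T this)
  -- y = m
  have hym : y = m := by
    by_contra hne
    have hancy : T.Anc m y := hancW y (hqinW y (walk_head_mem hwq))
    have hinloop : InLoop G T.Anc m y :=
      ⟨hancy, q ++ (p₁ ++ [m]).tail, hwC, fun z hz => hancW z (hCinW z hz)⟩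
    have := (hlp.2 y hy).2.2.2 m hancy (fun he => hne he.symm) hinloop
    rw [hpy] at this
    exact hms (anc_of_root_eq T this)
  exact hxy (hxm.trans hym.symm)

end Aux

/-- `s` is a strong articulation point of `G` if and only if `s` has at least two
children in the loop nesting tree `H` of `G_s`. -/
theorem stmt17 (G : V → V → Prop) (hG : StronglyConnected G) (s : V)
    (T : DFSTree G s) (hp : V → V) (hlp : IsLoopParent G s T.Anc hp) :
    IsStrongArticulationPoint G s ↔
      ∃ x y, x ≠ y ∧ x ≠ s ∧ y ≠ s ∧ hp x = s ∧ hp y = s := by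
  constructor
  · rintro ⟨a, b, ha, hb, -, hnsc⟩
    by_contra hno
    apply hnsc
    obtain ⟨ca, hca1, hca2, hca3, pa, hpa⟩ := reach_child T hlp (T.pre a) a le_rfl ha
    obtain ⟨cb, hcb1, hcb2, hcb3, pb, hpb⟩ := reach_child T hlp (T.pre b) b le_rfl hb
    have hcc : ca = cb := by
      by_contra hne
      exact hno ⟨ca, cb, hne, hca1, hcb1, hca2, hcb2⟩
    subst hcc
    obtain ⟨qa, hqa⟩ := reach_down T hca3 hca1
    obtain ⟨qb, hqb⟩ := reach_down T hcb3 hca1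
    exact ⟨⟨_, (walk_append hpa hqb).1⟩, ⟨_, (walk_append hpb hqa).1⟩⟩
  · rintro ⟨x, y, hxy, hx, hy, hpx, hpy⟩
    refine ⟨x, y, hx, hy, ⟨hG x y, hG y x⟩, ?_⟩
    rintro ⟨⟨p, hwp⟩, ⟨q, hwq⟩⟩
    have hnsp := walk_ne_s p x y hwp hx
    have hnsq := walk_ne_s q y x hwq hy
    have hns : ∀ z, z ∈ p ∨ z ∈ q → z ≠ s := fun z hz => hz.elim (hnsp z) (hnsq z)
    have hpG : IsWalk G x y p := walk_mono (fun a b h => h.1) hwp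
    have hqG : IsWalk G y x q := walk_mono (fun a b h => h.1) hwq
    have hpq : p ++ q ≠ [] := by
      have := walk_nonempty hpG
      cases p with
      | nil => exact absurd rfl this
      | cons a t => simp
    obtain ⟨m, hm, hmin⟩ := exists_min_pre T.pre (p ++ q) hpq
    have hmin' : ∀ z, z ∈ p ∨ z ∈ q → T.pre m ≤ T.pre z :=
      fun z hz => hmin z (List.mem_append.mpr hz)
    rcases List.mem_append.mp hm with hmp | hmq
    · exact lemE T hlp hx hy hpx hpy hxy hpG hqG hns hmin' hmp
    · exact lemE T hlp hy hx hpy hpx hxy.symm hqG hpG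
        (fun z hz => hns z hz.symm) (fun z hz => hmin' z hz.symm) hmq

end StrongConn
end
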